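/- Let K ⊂ ℝ^m be compact and C = {D ∈ ℝ^{m×k} : each column has ℓ²-norm ≤ 1}. Suppose for each x ∈ K and D ∈ C the Lasso problem min_α (1/2)‖x − Dα‖₂² + λ‖α‖₁ has a unique solution α★(x,D). Then the function ℓ(x,D) = min_α (1/2)‖x − Dα‖₂² + λ‖α‖₁ is continuously differentiable in D with ∇_D ℓ(x,D) = −(x − Dα★(x,D)) α★(x,D)ᵀ. -/

import Mathlib

open Finset
open scoped RealInnerProductSpace

noncomputable section LassoAux
variable {m k : ℕ}

/-- The Lasso objective as a function of the dictionary and the code. -/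
def Fobj (lam : ℝ) (x : Fin m → ℝ) (D : EuclideanSpace ℝ (Fin m × Fin k)) (α : Fin k → ℝ) : ℝ :=
  (1/2) * (∑ i, (x i - ∑ j, D (i, j) * α j)^2) + lam * ∑ j, |α j|

/-- The candidate gradient of the objective in the dictionary variable. -/
def Gobj (x : Fin m → ℝ) (D : EuclideanSpace ℝ (Fin m × Fin k)) (α : Fin k → ℝ) :
    EuclideanSpace ℝ (Fin m × Fin k) :=
  WithLp.toLp 2 (fun p : Fin m × Fin k => -(x p.1 - ∑ j, D (p.1, j) * α j) * α p.2)

lemma contEval (p : Fin m × Fin k) :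
    Continuous (fun v : EuclideanSpace ℝ (Fin m × Fin k) => v p) :=
  (EuclideanSpace.proj p).continuous

lemma Fobj_cont (lam : ℝ) (x : Fin m → ℝ) :
    Continuous (fun q : EuclideanSpace ℝ (Fin m × Fin k) × (Fin k → ℝ) =>
      Fobj lam x q.1 q.2) := by
  unfold Fobj
  apply Continuous.add
  · exact continuous_const.mul (continuous_finset_sum _ fun i _ =>
      ((continuous_const.sub (continuous_finset_sum _ fun j _ =>
        ((contEval (i, j)).comp continuous_fst).mul
          ((continuous_apply j).comp continuous_snd))).pow 2))
  · exact continuous_const.mul (continuous_finset_sum _ fun j _ =>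
      ((continuous_apply j).comp continuous_snd).abs)

lemma Gobj_cont (x : Fin m → ℝ) :
    Continuous (fun q : EuclideanSpace ℝ (Fin m × Fin k) × (Fin k → ℝ) =>
      Gobj x q.1 q.2) := by
  unfold Gobj
  refine (PiLp.continuous_toLp _ _).comp ?_
  apply continuous_pi
  intro p
  exact (((continuous_const.sub (continuous_finset_sum _ fun j _ =>
      ((contEval (p.1, j)).comp continuous_fst).mul
        ((continuous_apply j).comp continuous_snd))).neg).mul
    ((continuous_apply p.2).comp continuous_snd))

lemma Fobj_tendsto (lam : ℝ) (x : Fin m → ℝ) {ι : Type*} {l : Filter ι}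
    {u : ι → EuclideanSpace ℝ (Fin m × Fin k)} {v : ι → Fin k → ℝ}
    {D : EuclideanSpace ℝ (Fin m × Fin k)} {β : Fin k → ℝ}
    (hu : Filter.Tendsto u l (nhds D)) (hv : Filter.Tendsto v l (nhds β)) :
    Filter.Tendsto (fun n => Fobj lam x (u n) (v n)) l (nhds (Fobj lam x D β)) := by
  have h1 := hu.prodMk_nhds hv
  have h2 := (Fobj_cont lam x).tendsto (D, β)
  have h3 := h2.comp h1
  exact h3

lemma Gobj_tendsto (x : Fin m → ℝ) {ι : Type*} {l : Filter ι}
    {u : ι → EuclideanSpace ℝ (Fin m × Fin k)} {v : ι → Fin k → ℝ}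
    {D : EuclideanSpace ℝ (Fin m × Fin k)} {β : Fin k → ℝ}
    (hu : Filter.Tendsto u l (nhds D)) (hv : Filter.Tendsto v l (nhds β)) :
    Filter.Tendsto (fun n => Gobj x (u n) (v n)) l (nhds (Gobj x D β)) := by
  have h1 := hu.prodMk_nhds hv
  have h2 := (Gobj_cont x).tendsto (D, β)
  have h3 := h2.comp h1
  exact h3

lemma Fobj_nonneg {lam : ℝ} (hlam : 0 ≤ lam) (x : Fin m → ℝ)
    (D : EuclideanSpace ℝ (Fin m × Fin k)) (α : Fin k → ℝ) : 0 ≤ Fobj lam x D α := by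
  unfold Fobj
  have h1 : (0:ℝ) ≤ ∑ i, (x i - ∑ j, D (i, j) * α j)^2 :=
    Finset.sum_nonneg fun i _ => sq_nonneg _
  have h2 : (0:ℝ) ≤ ∑ j, |α j| := Finset.sum_nonneg fun j _ => abs_nonneg _
  positivity

lemma Fobj_lower (lam : ℝ) (x : Fin m → ℝ)
    (D : EuclideanSpace ℝ (Fin m × Fin k)) (α : Fin k → ℝ) :
    lam * (∑ j, |α j|) ≤ Fobj lam x D α := by
  unfold Fobj
  have h1 : (0:ℝ) ≤ ∑ i, (x i - ∑ j, D (i, j) * α j)^2 :=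
    Finset.sum_nonneg fun i _ => sq_nonneg _
  linarith

lemma Fobj_expand (lam : ℝ) (x : Fin m → ℝ) (D D' : EuclideanSpace ℝ (Fin m × Fin k))
    (α : Fin k → ℝ) :
    Fobj lam x D' α = Fobj lam x D α + ⟪Gobj x D α, D' - D⟫
      + (1/2) * ∑ i, (∑ j, (D' (i, j) - D (i, j)) * α j)^2 := by
  set a : Fin m → ℝ := fun i => x i - ∑ j, D (i, j) * α j with ha
  set b : Fin m → ℝ := fun i => ∑ j, (D' (i, j) - D (i, j)) * α j with hbdef
  have hinner : ⟪Gobj x D α, D' - D⟫ = -∑ i, a i * b i := by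
    rw [PiLp.inner_apply, Fintype.sum_prod_type, ← Finset.sum_neg_distrib]
    refine Finset.sum_congr rfl fun i _ => ?_
    rw [hbdef]
    simp only [← Finset.sum_neg_distrib, Finset.mul_sum]
    refine Finset.sum_congr rfl fun j _ => ?_
    simp only [Gobj, PiLp.toLp_apply, PiLp.sub_apply, RCLike.inner_apply, conj_trivial, ha]
    ring
  have hb : ∀ i, (x i - ∑ j, D' (i, j) * α j) = a i - b i := by
    intro i
    simp only [ha, hbdef, sub_mul, Finset.sum_sub_distrib]
    ring
  have hsum : ∑ i, (x i - ∑ j, D' (i, j) * α j)^2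
      = ∑ i, a i ^ 2 + ∑ i, b i ^ 2 - 2 * ∑ i, a i * b i := by
    have : ∀ i ∈ Finset.univ, (x i - ∑ j, D' (i, j) * α j)^2
        = a i ^ 2 + b i ^ 2 - 2 * (a i * b i) := by
      intro i _; rw [hb i]; ring
    rw [Finset.sum_congr rfl this, Finset.sum_sub_distrib, Finset.sum_add_distrib,
      ← Finset.mul_sum]
  unfold Fobj
  rw [hsum, hinner]
  ring

lemma abs_coord_le_norm (v : EuclideanSpace ℝ (Fin m × Fin k)) (p : Fin m × Fin k) :
    |v p| ≤ ‖v‖ := by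
  rw [EuclideanSpace.norm_eq, ← Real.sqrt_sq_eq_abs]
  apply Real.sqrt_le_sqrt
  calc (v p)^2 = ‖v p‖^2 := by rw [Real.norm_eq_abs, sq_abs]
    _ ≤ ∑ q, ‖v q‖^2 := Finset.single_le_sum (f := fun q => ‖v q‖^2)
          (fun q _ => sq_nonneg _) (Finset.mem_univ p)

lemma quad_bound (v : EuclideanSpace ℝ (Fin m × Fin k)) (α : Fin k → ℝ) :
    ∑ i, (∑ j, v (i, j) * α j)^2 ≤ (m * (∑ j, |α j|)^2) * ‖v‖^2 := by
  have key : ∀ i : Fin m, (∑ j, v (i, j) * α j)^2 ≤ (∑ j, |α j|)^2 * ‖v‖^2 := by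
    intro i
    have h1 : |∑ j, v (i, j) * α j| ≤ (∑ j, |α j|) * ‖v‖ := by
      calc |∑ j, v (i, j) * α j| ≤ ∑ j, |v (i, j) * α j| := Finset.abs_sum_le_sum_abs _ _
        _ ≤ ∑ j, ‖v‖ * |α j| := by
            refine Finset.sum_le_sum fun j _ => ?_
            rw [abs_mul]
            exact mul_le_mul_of_nonneg_right (abs_coord_le_norm v (i, j)) (abs_nonneg _)
        _ = (∑ j, |α j|) * ‖v‖ := by rw [← Finset.mul_sum, mul_comm]
    calc (∑ j, v (i, j) * α j)^2 = |∑ j, v (i, j) * α j|^2 := (sq_abs _).symm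
      _ ≤ ((∑ j, |α j|) * ‖v‖)^2 := by
          apply pow_le_pow_left₀ (abs_nonneg _) h1
      _ = (∑ j, |α j|)^2 * ‖v‖^2 := by ring
  calc ∑ i, (∑ j, v (i, j) * α j)^2 ≤ ∑ _i : Fin m, (∑ j, |α j|)^2 * ‖v‖^2 :=
        Finset.sum_le_sum fun i _ => key i
    _ = (m * (∑ j, |α j|)^2) * ‖v‖^2 := by
        rw [Finset.sum_const, Finset.card_univ, Fintype.card_fin]; ring

end LassoAux

set_option maxHeartbeats 1000000 in
/-- Regularity of the Lasso optimal value: if for every `x ∈ K` and every dictionary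
`D` in the constraint set the Lasso solution `α★(x,D)` is unique, then
`ℓ(x,·) = min_α (1/2)‖x − Dα‖₂² + λ‖α‖₁` is continuously differentiable on the
constraint set with gradient `−(x − Dα★(x,D)) α★(x,D)ᵀ`. -/
theorem lasso_value_continuously_differentiable (m k : ℕ) (lam : ℝ) (hlam : 0 < lam)
    (K : Set (Fin m → ℝ)) (hK : IsCompact K)
    (Cset : Set (EuclideanSpace ℝ (Fin m × Fin k)))
    (hC : Cset = {Dm | ∀ j : Fin k, ∑ i, (Dm (i, j))^2 ≤ 1})
    (αstar : (Fin m → ℝ) → EuclideanSpace ℝ (Fin m × Fin k) → (Fin k → ℝ))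
    (hαstar : ∀ x ∈ K, ∀ Dm ∈ Cset, ∀ β : Fin k → ℝ, β ≠ αstar x Dm →
        (1/2) * (∑ i, (x i - ∑ j, Dm (i, j) * αstar x Dm j)^2) +
            lam * ∑ j, |αstar x Dm j| <
        (1/2) * (∑ i, (x i - ∑ j, Dm (i, j) * β j)^2) + lam * ∑ j, |β j|)
    (ℓfun : (Fin m → ℝ) → EuclideanSpace ℝ (Fin m × Fin k) → ℝ)
    (hℓ : ∀ x Dm, ℓfun x Dm = ⨅ α : Fin k → ℝ,
        ((1/2) * (∑ i, (x i - ∑ j, Dm (i, j) * α j)^2) + lam * ∑ j, |α j|)) :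
    ∀ x ∈ K, ∀ Dm ∈ Cset,
      HasGradientWithinAt (ℓfun x)
        ((WithLp.toLp 2 (fun p : Fin m × Fin k =>
            -(x p.1 - ∑ j, Dm (p.1, j) * αstar x Dm j) * αstar x Dm p.2) :
          EuclideanSpace ℝ (Fin m × Fin k))) Cset Dm ∧
      ContinuousOn (fun Dm' : EuclideanSpace ℝ (Fin m × Fin k) =>
        ((WithLp.toLp 2 (fun p : Fin m × Fin k =>
            -(x p.1 - ∑ j, Dm' (p.1, j) * αstar x Dm' j) * αstar x Dm' p.2) :
          EuclideanSpace ℝ (Fin m × Fin k)))) Cset := by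
  intro x hx
  -- minimality of the Lasso solution
  have hmin : ∀ D ∈ Cset, ∀ β : Fin k → ℝ,
      Fobj lam x D (αstar x D) ≤ Fobj lam x D β := by
    intro D hD β
    by_cases hβ : β = αstar x D
    · rw [hβ]
    · exact le_of_lt (hαstar x hx D hD β hβ)
  -- the value function is the value at the minimizer
  have hval : ∀ D ∈ Cset, ℓfun x D = Fobj lam x D (αstar x D) := by
    intro D hD
    rw [hℓ]
    refine le_antisymm ?_ ?_
    · refine ciInf_le ⟨0, fun y hy => ?_⟩ (αstar x D)
      obtain ⟨α, rfl⟩ := hy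
      exact Fobj_nonneg hlam.le x D α
    · exact le_ciInf fun β => hmin D hD β
  -- continuity of the minimizer on the constraint set
  have hAcont : ∀ D ∈ Cset,
      Filter.Tendsto (αstar x) (nhdsWithin D Cset) (nhds (αstar x D)) := by
    intro D hD
    apply Filter.tendsto_of_subseq_tendsto
    intro ns hns
    have hmemev : ∀ᶠ n in Filter.atTop, ns n ∈ Cset :=
      hns.eventually eventually_mem_nhdsWithin
    obtain ⟨N, hN⟩ := Filter.eventually_atTop.1 hmemev
    set R : ℝ := ((1/2) * ∑ i, (x i)^2) / lam with hR
    have hbound : ∀ n : ℕ, ∀ j, |αstar x (ns (n + N)) j| ≤ R := by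
      intro n j
      have hmem : ns (n + N) ∈ Cset := hN _ (Nat.le_add_left N n)
      have h1 : lam * (∑ j', |αstar x (ns (n + N)) j'|)
          ≤ Fobj lam x (ns (n + N)) (αstar x (ns (n + N))) := Fobj_lower _ _ _ _
      have h2 : Fobj lam x (ns (n + N)) (αstar x (ns (n + N)))
          ≤ Fobj lam x (ns (n + N)) 0 := hmin _ hmem 0
      have h3 : Fobj lam x (ns (n + N)) 0 = (1/2) * ∑ i, (x i)^2 := by
        simp [Fobj]
      have h4 : |αstar x (ns (n + N)) j| ≤ ∑ j', |αstar x (ns (n + N)) j'| :=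
        Finset.single_le_sum (f := fun j' => |αstar x (ns (n + N)) j'|)
          (fun j' _ => abs_nonneg _) (Finset.mem_univ j)
      rw [hR, le_div_iff₀ hlam]
      nlinarith [h1, h2, h3, h4, hlam]
    have hcomp : IsCompact (Set.pi Set.univ (fun _ : Fin k => Set.Icc (-R) R)) :=
      isCompact_univ_pi fun _ => isCompact_Icc
    have hmem2 : ∀ n : ℕ,
        (αstar x (ns (n + N))) ∈ Set.pi Set.univ fun _ : Fin k => Set.Icc (-R) R := by
      intro n
      rw [Set.mem_univ_pi]
      intro j
      rw [Set.mem_Icc, ← abs_le]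
      exact hbound n j
    obtain ⟨β, hβmem, φ, hφ, hφt⟩ := hcomp.tendsto_subseq hmem2
    refine ⟨fun n => φ n + N, ?_⟩
    have hms : Filter.Tendsto (fun n => ns (φ n + N)) Filter.atTop (nhdsWithin D Cset) :=
      hns.comp (Filter.tendsto_atTop_mono (fun n => Nat.le_add_right _ _) hφ.tendsto_atTop)
    have hmsC : ∀ n, ns (φ n + N) ∈ Cset := fun n => hN _ (Nat.le_add_left _ _)
    have hmsD : Filter.Tendsto (fun n => ns (φ n + N)) Filter.atTop (nhds D) :=
      hms.mono_right nhdsWithin_le_nhds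
    have hφt' : Filter.Tendsto (fun n => αstar x (ns (φ n + N))) Filter.atTop (nhds β) := hφt
    have hβeq : β = αstar x D := by
      by_contra hne
      have hstrict : Fobj lam x D (αstar x D) < Fobj lam x D β :=
        hαstar x hx D hD β hne
      have lim1 : Filter.Tendsto (fun n => Fobj lam x (ns (φ n + N)) (αstar x (ns (φ n + N))))
          Filter.atTop (nhds (Fobj lam x D β)) := Fobj_tendsto lam x hmsD hφt'
      have lim2 : Filter.Tendsto (fun n => Fobj lam x (ns (φ n + N)) (αstar x D))
          Filter.atTop (nhds (Fobj lam x D (αstar x D))) :=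
        Fobj_tendsto lam x hmsD tendsto_const_nhds
      have hle : Fobj lam x D β ≤ Fobj lam x D (αstar x D) :=
        le_of_tendsto_of_tendsto' lim1 lim2 fun n => hmin _ (hmsC n) _
      exact absurd hle (not_le.2 hstrict)
    rw [← hβeq]
    exact hφt'
  intro Dm hDm
  constructor
  · -- differentiability
    show HasGradientWithinAt (ℓfun x) (Gobj x Dm (αstar x Dm)) Cset Dm
    rw [hasGradientWithinAt_iff_isLittleO, Asymptotics.isLittleO_iff]
    intro c hc
    set g : EuclideanSpace ℝ (Fin m × Fin k) := Gobj x Dm (αstar x Dm) with hg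
    set S : ℝ := ∑ j, |αstar x Dm j| with hS
    set CC : ℝ := m * S^2 / 2 with hCC'
    have hCC : 0 ≤ CC := by positivity
    have key : ∀ D' ∈ Cset, |ℓfun x D' - ℓfun x Dm - ⟪g, D' - Dm⟫|
        ≤ (CC * ‖D' - Dm‖ + ‖Gobj x Dm (αstar x D') - g‖) * ‖D' - Dm‖ := by
      intro D' hD'
      have hv : ∀ p : Fin m × Fin k, (D' - Dm) p = D' p - Dm p := fun p => rfl
      have hup : ℓfun x D' - ℓfun x Dm - ⟪g, D' - Dm⟫ ≤ CC * (‖D' - Dm‖ * ‖D' - Dm‖) := by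
        have h1 : ℓfun x D' ≤ Fobj lam x D' (αstar x Dm) := by
          rw [hval D' hD']; exact hmin D' hD' _
        have h2 := Fobj_expand lam x Dm D' (αstar x Dm)
        have h3 := quad_bound (D' - Dm) (αstar x Dm)
        simp only [hv] at h3
        have h4 : ℓfun x Dm = Fobj lam x Dm (αstar x Dm) := hval Dm hDm
        rw [hCC', hS]
        nlinarith [h1, h2, h3, h4]
      have hlow : -(‖Gobj x Dm (αstar x D') - g‖ * ‖D' - Dm‖)
          ≤ ℓfun x D' - ℓfun x Dm - ⟪g, D' - Dm⟫ := by
        have h1 : ℓfun x Dm ≤ Fobj lam x Dm (αstar x D') := by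
          rw [hval Dm hDm]; exact hmin Dm hDm _
        have h2 := Fobj_expand lam x Dm D' (αstar x D')
        have h3 : ℓfun x D' = Fobj lam x D' (αstar x D') := hval D' hD'
        have h4 : (0:ℝ) ≤ (1/2) * ∑ i, (∑ j, (D' (i, j) - Dm (i, j)) * (αstar x D') j)^2 := by
          have h4' : (0:ℝ) ≤ ∑ i, (∑ j, (D' (i, j) - Dm (i, j)) * (αstar x D') j)^2 :=
            Finset.sum_nonneg fun i _ => sq_nonneg _
          linarith
        have h5 : ⟪Gobj x Dm (αstar x D'), D' - Dm⟫ - ⟪g, D' - Dm⟫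
            = ⟪Gobj x Dm (αstar x D') - g, D' - Dm⟫ := by
          rw [inner_sub_left]
        have h6 : -(‖Gobj x Dm (αstar x D') - g‖ * ‖D' - Dm‖)
            ≤ ⟪Gobj x Dm (αstar x D') - g, D' - Dm⟫ :=
          (abs_le.1 (abs_real_inner_le_norm _ _)).1
        linarith
      have hn1 : (0:ℝ) ≤ ‖Gobj x Dm (αstar x D') - g‖ * ‖D' - Dm‖ := by positivity
      have hn2 : (0:ℝ) ≤ CC * (‖D' - Dm‖ * ‖D' - Dm‖) := by positivity
      rw [abs_le]
      constructor <;> nlinarith [hup, hlow, hn1, hn2]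
    have htend : Filter.Tendsto
        (fun D' => CC * ‖D' - Dm‖ + ‖Gobj x Dm (αstar x D') - g‖)
        (nhdsWithin Dm Cset) (nhds 0) := by
      have t1 : Filter.Tendsto (fun D' : EuclideanSpace ℝ (Fin m × Fin k) => CC * ‖D' - Dm‖)
          (nhdsWithin Dm Cset) (nhds 0) := by
        have hcont : Continuous fun D' : EuclideanSpace ℝ (Fin m × Fin k) => CC * ‖D' - Dm‖ :=
          continuous_const.mul ((continuous_id.sub continuous_const).norm)
        have h0 := (hcont.tendsto Dm).mono_left (nhdsWithin_le_nhds (s := Cset))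
        simpa using h0
      have t2 : Filter.Tendsto (fun D' => ‖Gobj x Dm (αstar x D') - g‖)
          (nhdsWithin Dm Cset) (nhds 0) := by
        have h1 : Filter.Tendsto (fun D' => Gobj x Dm (αstar x D'))
            (nhdsWithin Dm Cset) (nhds (Gobj x Dm (αstar x Dm))) :=
          Gobj_tendsto x tendsto_const_nhds (hAcont Dm hDm)
        have h2 := (h1.sub tendsto_const_nhds (b := g)).norm
        simpa [hg] using h2
      have h := t1.add t2
      simpa using h
    filter_upwards [self_mem_nhdsWithin, htend.eventually (gt_mem_nhds hc)] with D' hD' hlt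
    rw [Real.norm_eq_abs]
    calc |ℓfun x D' - ℓfun x Dm - ⟪g, D' - Dm⟫|
        ≤ (CC * ‖D' - Dm‖ + ‖Gobj x Dm (αstar x D') - g‖) * ‖D' - Dm‖ := key D' hD'
      _ ≤ c * ‖D' - Dm‖ := mul_le_mul_of_nonneg_right hlt.le (norm_nonneg _)
  · -- continuity of the gradient map
    show ContinuousOn (fun D' => Gobj x D' (αstar x D')) Cset
    intro D hD
    show Filter.Tendsto (fun D' => Gobj x D' (αstar x D'))
      (nhdsWithin D Cset) (nhds (Gobj x D (αstar x D)))
    exact Gobj_tendsto x (Filter.tendsto_id.mono_right nhdsWithin_le_nhds) (hAcont D hD)
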